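/- Let a be a strongly regular scale factor. Then for each fixed τ > 0, the limit as t₀ → 0⁺ of ∫_{t₀}^τ (a''(t)/a'(t)²)·[√(a(τ)²−a(t₀)²)/√(a(τ)²−a(t)²) − 1] dt exists and is finite, and equals ∫_0^τ (a''(t)/a'(t)²)·[a(τ)/√(a(τ)²−a(t)²) − 1] dt. -/

import Mathlib

open Set MeasureTheory Filter

set_option maxHeartbeats 2000000 in
theorem gtautau_limit_exists (a : ℝ → ℝ)
    (ha0 : a 0 = 0)
    (hmono : StrictMonoOn a (Set.Ici 0))
    (hcont : ContinuousOn a (Set.Ici 0))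
    (hsmooth : ContDiffOn ℝ 2 a (Set.Ioi 0))
    (hreg : ∀ t > (0:ℝ), a t * deriv (deriv a) t / (deriv a t) ^ 2 ≤ 1)
    (K : ℝ) (hK : 1 ≤ K)
    (hKbound : ∀ t > (0:ℝ), -K ≤ a t * deriv (deriv a) t / (deriv a t) ^ 2) :
    ∀ τ > (0:ℝ),
      Filter.Tendsto
        (fun t₀ => ∫ t in t₀..τ, (deriv (deriv a) t / (deriv a t) ^ 2) *
          (Real.sqrt ((a τ) ^ 2 - (a t₀) ^ 2) / Real.sqrt ((a τ) ^ 2 - (a t) ^ 2) - 1))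
        (nhdsWithin 0 (Set.Ioi 0))
        (nhds (∫ t in (0:ℝ)..τ, (deriv (deriv a) t / (deriv a t) ^ 2) *
          (a τ / Real.sqrt ((a τ) ^ 2 - (a t) ^ 2) - 1))) := by
  intro τ hτ
  set A : ℝ := a τ with hAdef
  set f : ℝ → ℝ := fun t => deriv (deriv a) t / (deriv a t) ^ 2 with hfdef
  -- positivity facts
  have ha_pos : ∀ t : ℝ, 0 < t → 0 < a t := fun t ht => by
    have := hmono Set.self_mem_Ici (Set.mem_Ici.2 ht.le) ht; rwa [ha0] at this
  have hA : 0 < A := ha_pos τ hτ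
  have ha_mono : MonotoneOn a (Set.Ici 0) := hmono.monotoneOn
  have ha_le : ∀ t : ℝ, 0 < t → t ≤ τ → a t ≤ A := fun t ht htτ =>
    ha_mono ht.le hτ.le htτ
  have ha_lt : ∀ t : ℝ, 0 < t → t < τ → a t < A := fun t ht htτ =>
    hmono ht.le hτ.le htτ
  -- differentiability
  have hd1 : ∀ t : ℝ, 0 < t → HasDerivAt a (deriv a t) t := by
    intro t ht
    have : DifferentiableOn ℝ a (Set.Ioi 0) := hsmooth.differentiableOn (by norm_num)
    exact (this.differentiableAt (isOpen_Ioi.mem_nhds ht)).hasDerivAt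
  have hC1 : ContDiffOn ℝ 1 (deriv a) (Set.Ioi 0) :=
    hsmooth.deriv_of_isOpen isOpen_Ioi (by norm_num)
  have hd2 : ∀ t : ℝ, 0 < t → HasDerivAt (deriv a) (deriv (deriv a) t) t := by
    intro t ht
    have : DifferentiableOn ℝ (deriv a) (Set.Ioi 0) := hC1.differentiableOn (by norm_num)
    exact (this.differentiableAt (isOpen_Ioi.mem_nhds ht)).hasDerivAt
  -- a' is nonnegative
  have hd_nonneg : ∀ t : ℝ, 0 < t → 0 ≤ deriv a t := by
    intro t ht
    have h1 : Filter.Tendsto (slope a t) (nhdsWithin t (Set.Ioi t)) (nhds (deriv a t)) :=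
      (hasDerivAt_iff_tendsto_slope.1 (hd1 t ht)).mono_left
        (nhdsWithin_mono t fun x hx => ne_of_gt hx)
    refine ge_of_tendsto h1 ?_
    filter_upwards [self_mem_nhdsWithin] with x hx
    have : a t ≤ a x := ha_mono (le_of_lt ht) (le_of_lt (ht.trans hx)) (le_of_lt hx)
    have hxt : 0 < x - t := sub_pos.2 hx
    rw [slope_def_field]
    exact div_nonneg (by linarith) hxt.le
  -- a'' vanishes where a' vanishes
  have hd2_zero : ∀ t : ℝ, 0 < t → deriv a t = 0 → deriv (deriv a) t = 0 := by
    intro t ht h0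
    refine IsLocalMin.deriv_eq_zero ?_
    filter_upwards [isOpen_Ioi.mem_nhds ht] with x hx
    rw [h0]; exact hd_nonneg x hx
  -- |f t| ≤ K / a t
  have hKpos : 0 < K := lt_of_lt_of_le one_pos hK
  have hf_bound : ∀ t : ℝ, 0 < t → |f t| ≤ K / a t := by
    intro t ht
    rcases eq_or_ne (deriv a t) 0 with h0 | h0
    · simp only [hfdef, h0]
      norm_num
      exact div_nonneg hKpos.le (ha_pos t ht).le
    · have h2 : (0:ℝ) < (deriv a t) ^ 2 := by positivity
      have hat : 0 < a t := ha_pos t ht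
      have e1 : a t * deriv (deriv a) t / (deriv a t) ^ 2 = a t * f t := by
        rw [hfdef]; ring
      have h3 := hreg t ht
      have h4 := hKbound t ht
      rw [e1] at h3 h4
      rw [abs_le]
      constructor
      · rw [← neg_div, div_le_iff₀ hat]
        nlinarith
      · rw [le_div_iff₀ hat]
        nlinarith
  -- a mean value point with positive derivative
  obtain ⟨c, hc, hc'⟩ : ∃ c ∈ Set.Ioo (τ/2) τ, deriv a c = (a τ - a (τ/2)) / (τ - τ/2) := by
    apply exists_deriv_eq_slope a (by linarith)
    · exact hcont.mono (fun x hx => le_trans (by linarith) hx.1)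
    · intro x hx
      exact (hd1 x (lt_of_le_of_lt (by linarith) hx.1)).differentiableAt.differentiableWithinAt
  have hcpos : 0 < c := lt_trans (by linarith) hc.1
  have hacA : a c < A := ha_lt c hcpos hc.2
  have hc'pos : 0 < deriv a c := by
    rw [hc']
    apply div_pos _ (by linarith)
    have := hmono (le_of_lt (show (0:ℝ) < τ/2 by linarith)) hτ.le (by linarith)
    linarith
  -- the function a' * a^K is monotone on [c, τ]
  have hgderiv : ∀ x ∈ Set.Ioi (0:ℝ), HasDerivAt (fun t => deriv a t * a t ^ K)
      (deriv (deriv a) x * a x ^ K + deriv a x * (K * a x ^ (K - 1) * deriv a x)) x := by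
    intro x hx
    have h1 : HasDerivAt (fun t => a t ^ K) (K * a x ^ (K - 1) * deriv a x) x := by
      have h2 := (Real.hasDerivAt_rpow_const (x := a x) (p := K)
        (Or.inl (ha_pos x hx).ne')).comp x (hd1 x hx)
      simpa [mul_assoc, Function.comp_def] using h2
    exact (hd2 x hx).mul h1
  have hgmono : MonotoneOn (fun t => deriv a t * a t ^ K) (Set.Icc c τ) := by
    apply monotoneOn_of_deriv_nonneg (convex_Icc c τ)
    · intro x hx
      exact (hgderiv x (lt_of_lt_of_le hcpos hx.1)).continuousAt.continuousWithinAt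
    · intro x hx
      rw [interior_Icc] at hx
      exact (hgderiv x (lt_trans hcpos hx.1)).differentiableAt.differentiableWithinAt
    · intro x hx
      rw [interior_Icc] at hx
      have hx0 : 0 < x := lt_trans hcpos hx.1
      rw [(hgderiv x hx0).deriv]
      rcases eq_or_ne (deriv a x) 0 with h0 | h0
      · rw [h0, hd2_zero x hx0 h0]; simp
      · have hax : 0 < a x := ha_pos x hx0
        have hpow2 : (0:ℝ) < (deriv a x) ^ 2 := by positivity
        have h5 : -K * (deriv a x) ^ 2 ≤ a x * deriv (deriv a) x := by
          have h6 := hKbound x hx0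
          have h7 := (le_div_iff₀ hpow2).1 h6
          linarith [h7]
        have hK1 : a x ^ K = a x ^ (K - 1) * a x := by
          conv_lhs => rw [show K = (K - 1) + 1 by ring]
          rw [Real.rpow_add_one hax.ne']
        have hpow : 0 < a x ^ (K - 1) := Real.rpow_pos_of_pos hax _
        rw [hK1]
        nlinarith [mul_le_mul_of_nonneg_left h5 hpow.le]
  -- lower bound on a' on [c, τ]
  set c₀ : ℝ := deriv a c * a c ^ K / A ^ K with hc₀def
  have hc₀pos : 0 < c₀ := by
    apply div_pos (mul_pos hc'pos (Real.rpow_pos_of_pos (ha_pos c hcpos) K))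
      (Real.rpow_pos_of_pos hA K)
  have hlow : ∀ t ∈ Set.Icc c τ, c₀ ≤ deriv a t := by
    intro t htm
    have ht : 0 < t := lt_of_lt_of_le hcpos htm.1
    have h1 : deriv a c * a c ^ K ≤ deriv a t * a t ^ K :=
      hgmono (Set.left_mem_Icc.2 (le_of_lt hc.2)) htm htm.1
    have h2 : a t ^ K ≤ A ^ K :=
      Real.rpow_le_rpow (ha_pos t ht).le (ha_le t ht htm.2) (by linarith)
    have h3 : (0:ℝ) < a t ^ K := Real.rpow_pos_of_pos (ha_pos t ht) K
    have h4 : (0:ℝ) < A ^ K := Real.rpow_pos_of_pos hA K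
    rw [hc₀def, div_le_iff₀ h4]
    calc deriv a c * a c ^ K ≤ deriv a t * a t ^ K := h1
      _ ≤ deriv a t * A ^ K := by
          exact mul_le_mul_of_nonneg_left h2 (hd_nonneg t ht)
  -- gap estimate
  have hgap : ∀ t ∈ Set.Icc c τ, c₀ * (τ - t) ≤ A - a t := by
    have hm : MonotoneOn (fun t => a t - c₀ * t) (Set.Icc c τ) := by
      apply monotoneOn_of_deriv_nonneg (convex_Icc c τ)
      · intro x hx
        exact ((hd1 x (lt_of_lt_of_le hcpos hx.1)).sub
          ((hasDerivAt_id x).const_mul c₀)).continuousAt.continuousWithinAt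
      · intro x hx
        rw [interior_Icc] at hx
        exact ((hd1 x (lt_trans hcpos hx.1)).sub
          ((hasDerivAt_id x).const_mul c₀)).differentiableAt.differentiableWithinAt
      · intro x hx
        rw [interior_Icc] at hx
        have hx0 : 0 < x := lt_trans hcpos hx.1
        have hd : HasDerivAt (fun t => a t - c₀ * t) (deriv a x - c₀ * 1) x :=
          (hd1 x hx0).sub ((hasDerivAt_id x).const_mul c₀)
        rw [hd.deriv]
        have h1 := hlow x ⟨hx.1.le, hx.2.le⟩
        simp only [mul_one]
        linarith
    intro t ht
    have h2 := hm ht (Set.right_mem_Icc.2 (le_trans ht.1 ht.2)) ht.2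
    simp only at h2
    rw [hAdef]
    linarith
  -- dominating function
  set C₁ : ℝ := K * a c / (A ^ 2 - a c ^ 2) with hC₁def
  set C₂ : ℝ := K * A / (a c * Real.sqrt (A * c₀)) with hC₂def
  have hC₁pos : 0 ≤ C₁ := by
    apply div_nonneg (mul_nonneg hKpos.le (ha_pos c hcpos).le)
    nlinarith [ha_pos c hcpos]
  have hC₂pos : 0 ≤ C₂ :=
    div_nonneg (mul_nonneg hKpos.le hA.le)
      (mul_nonneg (ha_pos c hcpos).le (Real.sqrt_nonneg _))
  set G : ℝ → ℝ := fun t => C₁ + C₂ / Real.sqrt (τ - t) with hGdef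
  have hGnonneg : ∀ t, t ≤ τ → 0 ≤ G t := by
    intro t ht
    have : 0 ≤ Real.sqrt (τ - t) := Real.sqrt_nonneg _
    positivity
  set μ : Measure ℝ := volume.restrict (Set.Ioc 0 τ) with hμdef
  have hGint : Integrable G μ := by
    have h1 : IntegrableOn (fun _ : ℝ => C₁) (Set.Ioc 0 τ) :=
      integrableOn_const measure_Ioc_lt_top.ne
    have h2 : IntervalIntegrable (fun t => (τ - t) ^ (-(1/2):ℝ)) volume 0 τ := by
      have h3 := (intervalIntegral.intervalIntegrable_rpow'
        (a := 0) (b := τ) (r := -(1/2)) (by norm_num)).comp_sub_left τ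
      simpa using h3.symm
    have h4 : IntegrableOn (fun t => C₂ * (τ - t) ^ (-(1/2):ℝ)) (Set.Ioc 0 τ) :=
      ((intervalIntegrable_iff_integrableOn_Ioc_of_le hτ.le).1 h2).const_mul C₂
    have h5 : IntegrableOn (fun t => C₂ / Real.sqrt (τ - t)) (Set.Ioc 0 τ) := by
      apply h4.congr_fun _ measurableSet_Ioc
      intro t ht
      show C₂ * (τ - t) ^ (-(1/2):ℝ) = C₂ / Real.sqrt (τ - t)
      rw [Real.rpow_neg (by linarith [ht.2] : (0:ℝ) ≤ τ - t), ← Real.sqrt_eq_rpow,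
        div_eq_mul_inv]
    exact h1.add h5
  -- the family of integrands
  set F : ℝ → ℝ → ℝ := fun t₀ => (Set.Ioc t₀ τ).indicator
    (fun t => f t * (Real.sqrt (A ^ 2 - a t₀ ^ 2) / Real.sqrt (A ^ 2 - a t ^ 2) - 1))
    with hFdef
  set φ : ℝ → ℝ := fun t => f t * (A / Real.sqrt (A ^ 2 - a t ^ 2) - 1) with hφdef
  -- a.e. membership in Ioo 0 τ
  have hae : ∀ᵐ t ∂μ, t ∈ Set.Ioo 0 τ := by
    have h1 : ∀ᵐ x : ℝ ∂volume, x ≠ τ := by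
      rw [MeasureTheory.ae_iff]
      simpa using (Real.volume_singleton (x := τ))
    rw [hμdef, MeasureTheory.ae_restrict_iff' measurableSet_Ioc]
    filter_upwards [h1] with x hx hmem
    exact ⟨hmem.1, lt_of_le_of_ne hmem.2 hx⟩
  -- measurability
  have hfm : Measurable f := (measurable_deriv _).div ((measurable_deriv a).pow_const 2)
  have ham : AEMeasurable a μ :=
    (hcont.mono (fun x hx => le_of_lt hx.1)).aemeasurable measurableSet_Ioc
  have hFmeas : ∀ t₀ : ℝ, AEStronglyMeasurable (F t₀) μ := by
    intro t₀
    apply AEMeasurable.aestronglyMeasurable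
    apply AEMeasurable.indicator _ measurableSet_Ioc
    apply (hfm.aemeasurable.mul _)
    apply AEMeasurable.sub _ aemeasurable_const
    apply AEMeasurable.const_div
    exact Real.continuous_sqrt.measurable.comp_aemeasurable
      (aemeasurable_const.sub (ham.pow_const 2))
  -- the bound
  have hbound : ∀ t₀ ∈ Set.Ioo (0:ℝ) τ, ∀ t ∈ Set.Ioo (0:ℝ) τ, ‖F t₀ t‖ ≤ G t := by
    intro t₀ ht₀ t ht
    by_cases hmem : t ∈ Set.Ioc t₀ τ
    · simp only [hFdef]
      rw [Set.indicator_of_mem hmem]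
      have ht0 : 0 < t := ht.1
      have hat : 0 < a t := ha_pos t ht0
      have hatA : a t < A := ha_lt t ht0 ht.2
      have hP2 : 0 < A ^ 2 - a t ^ 2 := by nlinarith
      set P := Real.sqrt (A ^ 2 - a t ^ 2) with hPdef
      have hPpos : 0 < P := Real.sqrt_pos.2 hP2
      have hPsq : P ^ 2 = A ^ 2 - a t ^ 2 := Real.sq_sqrt hP2.le
      have hat₀ : 0 < a t₀ := ha_pos t₀ ht₀.1
      have hat₀t : a t₀ ≤ a t := ha_mono ht₀.1.le ht0.le hmem.1.le
      have hQ2 : 0 < A ^ 2 - a t₀ ^ 2 := by nlinarith [ha_lt t₀ ht₀.1 ht₀.2]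
      set Q := Real.sqrt (A ^ 2 - a t₀ ^ 2) with hQdef
      have hQpos : 0 < Q := Real.sqrt_pos.2 hQ2
      have hQsq : Q ^ 2 = A ^ 2 - a t₀ ^ 2 := Real.sq_sqrt hQ2.le
      have hQA : Q ≤ A := by
        have h1 : Q ≤ Real.sqrt (A ^ 2) := Real.sqrt_le_sqrt (by nlinarith)
        rwa [Real.sqrt_sq hA.le] at h1
      have hPQ : P ≤ Q := Real.sqrt_le_sqrt (by nlinarith)
      have hfac_nonneg : 0 ≤ Q / P - 1 := by
        rw [sub_nonneg, le_div_iff₀ hPpos, one_mul]; exact hPQ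
      have hfac1 : Q / P - 1 ≤ a t ^ 2 / (A ^ 2 - a t ^ 2) := by
        have hPP : P * P = A ^ 2 - a t ^ 2 := by nlinarith [hPsq]
        have h1 : (Q - P) * P ≤ a t ^ 2 := by
          nlinarith [mul_le_mul_of_nonneg_left (show P ≤ Q + P by linarith)
            (sub_nonneg.2 hPQ), hQsq, hPsq, sq_nonneg (a t₀)]
        have h2 : Q / P - 1 = (Q - P) / P := by field_simp
        rw [h2, div_le_div_iff₀ hPpos hP2]
        nlinarith [mul_le_mul_of_nonneg_right h1 hPpos.le, hPP]
      have hfac2 : Q / P - 1 ≤ A / P := by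
        have h1 : Q / P ≤ A / P := by gcongr
        linarith
      have hnorm : ‖f t * (Q / P - 1)‖ ≤ K / a t * (Q / P - 1) := by
        rw [Real.norm_eq_abs, abs_mul, abs_of_nonneg hfac_nonneg]
        exact mul_le_mul_of_nonneg_right (hf_bound t ht0) hfac_nonneg
      rcases le_or_gt t c with htc | htc
      · have hact : a t ≤ a c := ha_mono ht0.le hcpos.le htc
        have h6 : K / a t * (Q / P - 1) ≤ K * a t / (A ^ 2 - a t ^ 2) := by
          calc K / a t * (Q / P - 1)
              ≤ K / a t * (a t ^ 2 / (A ^ 2 - a t ^ 2)) :=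
                mul_le_mul_of_nonneg_left hfac1 (div_nonneg hKpos.le hat.le)
            _ = K * a t / (A ^ 2 - a t ^ 2) := by field_simp
        have h7 : K * a t / (A ^ 2 - a t ^ 2) ≤ C₁ := by
          rw [hC₁def]
          apply div_le_div₀ (mul_nonneg hKpos.le (ha_pos c hcpos).le)
            (mul_le_mul_of_nonneg_left hact hKpos.le)
            (by nlinarith [ha_pos c hcpos]) (by nlinarith)
        have hG : C₁ ≤ G t := by
          rw [hGdef]
          have h8 := div_nonneg hC₂pos (Real.sqrt_nonneg (τ - t))
          simp only
          linarith
        calc ‖f t * (Q / P - 1)‖ ≤ K / a t * (Q / P - 1) := hnorm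
          _ ≤ K * a t / (A ^ 2 - a t ^ 2) := h6
          _ ≤ C₁ := h7
          _ ≤ G t := hG
      · have hmemc : t ∈ Set.Icc c τ := ⟨htc.le, ht.2.le⟩
        have hτt : (0:ℝ) ≤ τ - t := by linarith [ht.2]
        have h8 : Real.sqrt (A * c₀) * Real.sqrt (τ - t) ≤ P := by
          rw [← Real.sqrt_mul (mul_nonneg hA.le hc₀pos.le)]
          apply Real.sqrt_le_sqrt
          have h9 := hgap t hmemc
          nlinarith [hat.le, mul_nonneg hc₀pos.le hτt]
        have hac_t : a c ≤ a t := ha_mono hcpos.le ht0.le htc.le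
        have hsAc : 0 < Real.sqrt (A * c₀) := Real.sqrt_pos.2 (by positivity)
        have hsτ : 0 ≤ Real.sqrt (τ - t) := Real.sqrt_nonneg _
        have h10 : K / a t * (Q / P - 1) ≤ C₂ / Real.sqrt (τ - t) := by
          have hsτpos : 0 < Real.sqrt (τ - t) := Real.sqrt_pos.2 (by linarith [ht.2])
          calc K / a t * (Q / P - 1)
              ≤ K / a t * (A / P) :=
                mul_le_mul_of_nonneg_left hfac2 (div_nonneg hKpos.le hat.le)
            _ ≤ K / a c * (A / (Real.sqrt (A * c₀) * Real.sqrt (τ - t))) := by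
                apply mul_le_mul
                · exact div_le_div_of_nonneg_left hKpos.le (ha_pos c hcpos) hac_t
                · exact div_le_div_of_nonneg_left hA.le (mul_pos hsAc hsτpos) h8
                · exact div_nonneg hA.le hPpos.le
                · exact div_nonneg hKpos.le (ha_pos c hcpos).le
            _ = C₂ / Real.sqrt (τ - t) := by
                rw [hC₂def]
                field_simp
        have hG : C₂ / Real.sqrt (τ - t) ≤ G t := by
          rw [hGdef]; simp only; linarith
        calc ‖f t * (Q / P - 1)‖ ≤ K / a t * (Q / P - 1) := hnorm
          _ ≤ C₂ / Real.sqrt (τ - t) := h10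
          _ ≤ G t := hG
    · simp only [hFdef]
      rw [Set.indicator_of_notMem hmem, norm_zero]
      exact hGnonneg t ht.2.le
  -- pointwise convergence
  have hlim : ∀ t ∈ Set.Ioo (0:ℝ) τ,
      Filter.Tendsto (fun t₀ => F t₀ t) (nhdsWithin 0 (Set.Ioi 0)) (nhds (φ t)) := by
    intro t ht
    have haT : Filter.Tendsto a (nhdsWithin 0 (Set.Ioi 0)) (nhds 0) := by
      have h0 : ContinuousWithinAt a (Set.Ici 0) 0 := hcont 0 Set.self_mem_Ici
      have h1 := h0.tendsto
      rw [ha0] at h1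
      exact h1.mono_left (nhdsWithin_mono 0 Set.Ioi_subset_Ici_self)
    have hQT : Filter.Tendsto (fun t₀ => Real.sqrt (A ^ 2 - a t₀ ^ 2))
        (nhdsWithin 0 (Set.Ioi 0)) (nhds A) := by
      have h1 : Filter.Tendsto (fun t₀ => A ^ 2 - a t₀ ^ 2)
          (nhdsWithin 0 (Set.Ioi 0)) (nhds (A ^ 2 - 0 ^ 2)) :=
        tendsto_const_nhds.sub (haT.pow 2)
      have h2 := (Real.continuous_sqrt.tendsto _).comp h1
      simp only [Function.comp_def] at h2
      have h3 : Real.sqrt (A ^ 2 - 0 ^ 2) = A := by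
        rw [show A ^ 2 - 0 ^ 2 = A ^ 2 by ring, Real.sqrt_sq hA.le]
      rwa [h3] at h2
    have hmain : Filter.Tendsto
        (fun t₀ => f t * (Real.sqrt (A ^ 2 - a t₀ ^ 2) / Real.sqrt (A ^ 2 - a t ^ 2) - 1))
        (nhdsWithin 0 (Set.Ioi 0)) (nhds (φ t)) := by
      rw [hφdef]
      exact tendsto_const_nhds.mul
        (((hQT.div_const (Real.sqrt (A ^ 2 - a t ^ 2))).sub tendsto_const_nhds))
    apply hmain.congr'
    filter_upwards [Ioo_mem_nhdsGT ht.1] with t₀ ht₀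
    simp only [hFdef, Set.indicator_of_mem (Set.mem_Ioc.2 ⟨ht₀.2, ht.2.le⟩)]
  -- apply dominated convergence
  have hDCT : Filter.Tendsto (fun t₀ => ∫ t, F t₀ t ∂μ) (nhdsWithin 0 (Set.Ioi 0))
      (nhds (∫ t, φ t ∂μ)) := by
    apply MeasureTheory.tendsto_integral_filter_of_dominated_convergence G
    · filter_upwards with t₀; exact hFmeas t₀
    · filter_upwards [Ioo_mem_nhdsGT hτ] with t₀ ht₀
      filter_upwards [hae] with t ht
      exact hbound t₀ ht₀ t ht
    · exact hGint
    · filter_upwards [hae] with t ht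
      exact hlim t ht
  -- identify the integrals
  have heq : ∀ t₀ ∈ Set.Ioo (0:ℝ) τ,
      (∫ t in t₀..τ, f t * (Real.sqrt (A ^ 2 - a t₀ ^ 2) / Real.sqrt (A ^ 2 - a t ^ 2) - 1))
        = ∫ t, F t₀ t ∂μ := by
    intro t₀ ht₀
    rw [intervalIntegral.integral_of_le ht₀.2.le, hFdef, hμdef]
    rw [MeasureTheory.integral_indicator measurableSet_Ioc,
      MeasureTheory.Measure.restrict_restrict measurableSet_Ioc,
      Set.inter_eq_self_of_subset_left (Set.Ioc_subset_Ioc_left ht₀.1.le)]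
  have hRHS : (∫ t in (0:ℝ)..τ, φ t) = ∫ t, φ t ∂μ := by
    rw [intervalIntegral.integral_of_le hτ.le, hμdef]
  rw [hRHS] at *
  apply hDCT.congr'
  filter_upwards [Ioo_mem_nhdsGT hτ] with t₀ ht₀
  exact (heq t₀ ht₀).symm
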